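/- Let N ≥ 1, d ≥ 2, and let D = {(x_n, y_n)}_{n=1}^N ⊂ ℝ^d × ℝ^d be a dataset with pairwise distinct inputs x_n and pairwise distinct targets y_n. Then there exists an orthogonal linear map Q : ℝ^d → ℝ^d such that the first coordinates (Q x_n)^{(1)}, n = 1, …, N, are pairwise distinct and the second coordinates (Q y_n)^{(2)}, n = 1, …, N, are pairwise distinct. -/

import Mathlib

open scoped RealInnerProductSpace

/-- A finite family of nonzero vectors admits a vector with all inner products
nonzero. -/
lemma exists_generic_vector {E : Type*} [NormedAddCommGroup E] [InnerProductSpace ℝ E]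
    {ι : Type*} [Finite ι] (z : ι → E) (hz : ∀ i, z i ≠ 0) :
    ∃ w : E, ∀ i, ⟪z i, w⟫ ≠ 0 := by
  by_contra h
  push_neg at h
  have hcover : ⋃ i, (((ℝ ∙ z i)ᗮ : Submodule ℝ E) : Set E) = Set.univ := by
    ext w
    simp only [Set.mem_iUnion, Set.mem_univ, iff_true]
    obtain ⟨i, hi⟩ := h w
    exact ⟨i, Submodule.mem_orthogonal_singleton_iff_inner_right.mpr hi⟩
  obtain ⟨i, hi⟩ := Subspace.exists_eq_top_of_iUnion_eq_univ hcover
  have : z i ∈ (ℝ ∙ z i)ᗮ := by rw [hi]; trivial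
  have : ⟪z i, z i⟫ = 0 := Submodule.mem_orthogonal_singleton_iff_inner_right.mp this
  exact inner_self_ne_zero.mpr (hz i) this

set_option maxHeartbeats 1000000 in
/-- There is an orthogonal change of coordinates making the first coordinates of
the inputs pairwise distinct and the second coordinates of the targets pairwise
distinct. -/
theorem statement3 (N d : ℕ) (hN : 1 ≤ N) (hd : 2 ≤ d)
    (x y : Fin N → EuclideanSpace ℝ (Fin d))
    (hx : Function.Injective x) (hy : Function.Injective y) :
    ∃ Q : EuclideanSpace ℝ (Fin d) ≃ₗᵢ[ℝ] EuclideanSpace ℝ (Fin d),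
      Function.Injective (fun n : Fin N => Q (x n) ⟨0, by omega⟩) ∧
      Function.Injective (fun n : Fin N => Q (y n) ⟨1, by omega⟩) := by
  classical
  set i0 : Fin d := ⟨0, by omega⟩
  set i1 : Fin d := ⟨1, by omega⟩
  have hi01 : i0 ≠ i1 := by simp [i0, i1, Fin.ext_iff]
  -- index type for all the conditions
  set P := {p : Fin N × Fin N // p.1 ≠ p.2}
  set ι := Option (P ⊕ P) with hι
  set z : ι → EuclideanSpace ℝ (Fin d) := fun i =>
    match i with
    | none => EuclideanSpace.single i0 (1 : ℝ)
    | some (Sum.inl p) => x p.1.1 - x p.1.2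
    | some (Sum.inr p) => y p.1.1 - y p.1.2 with hz
  have hznz : ∀ i, z i ≠ 0 := by
    rintro (_ | (p | p))
    · simp only [z]
      intro hc
      have : (EuclideanSpace.single i0 (1:ℝ) : EuclideanSpace ℝ (Fin d)) i0 = (0 : EuclideanSpace ℝ (Fin d)) i0 := by rw [hc]
      rw [EuclideanSpace.single_apply] at this
      simp only [Pi.zero_apply, if_pos rfl] at this
      exact one_ne_zero this
    · exact sub_ne_zero.mpr fun hc => p.2 (hx hc)
    · exact sub_ne_zero.mpr fun hc => p.2 (hy hc)
  obtain ⟨w₀, hw₀⟩ := exists_generic_vector z hznz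
  have hw₀nz : w₀ ≠ 0 := by
    intro hc
    exact hw₀ none (by simp [hc])
  -- normalize
  set w : EuclideanSpace ℝ (Fin d) := ‖w₀‖⁻¹ • w₀ with hwdef
  have hwnorm : ⟪w, w⟫ = 1 := by
    have : ‖w‖ = 1 := norm_smul_inv_norm hw₀nz
    rw [real_inner_self_eq_norm_sq, this]; norm_num
  have hw : ∀ i, ⟪z i, w⟫ ≠ 0 := by
    intro i
    rw [hwdef, real_inner_smul_right]
    exact mul_ne_zero (inv_ne_zero (norm_ne_zero_iff.mpr hw₀nz)) (hw₀ i)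
  -- find a unit vector orthogonal to w
  have hwne : (ℝ ∙ w) ≠ ⊤ := by
    intro hc
    have h1 : Module.finrank ℝ (ℝ ∙ w) = 1 := by
      refine finrank_span_singleton ?_
      intro hc'
      rw [hc'] at hwnorm
      simp at hwnorm
    rw [hc, finrank_top] at h1
    have : Module.finrank ℝ (EuclideanSpace ℝ (Fin d)) = d := finrank_euclideanSpace_fin
    omega
  have hlt : (ℝ ∙ w) < (⊤ : Submodule ℝ (EuclideanSpace ℝ (Fin d))) := lt_top_iff_ne_top.mpr hwne
  obtain ⟨v₀, -, hv₀⟩ := SetLike.exists_of_lt hlt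
  set w₁ : EuclideanSpace ℝ (Fin d) := v₀ - ⟪w, v₀⟫ • w with hw₁def
  have hw₁nz : w₁ ≠ 0 := by
    intro hc
    apply hv₀
    rw [sub_eq_zero] at hc
    rw [hc]
    exact Submodule.smul_mem _ _ (Submodule.mem_span_singleton_self w)
  have hww₁ : ⟪w, w₁⟫ = 0 := by
    rw [hw₁def, inner_sub_right, real_inner_smul_right, hwnorm]
    ring
  set w' : EuclideanSpace ℝ (Fin d) := ‖w₁‖⁻¹ • w₁ with hw'def
  have hw'norm : ⟪w', w'⟫ = 1 := by
    have : ‖w'‖ = 1 := norm_smul_inv_norm hw₁nz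
    rw [real_inner_self_eq_norm_sq, this]; norm_num
  have hww' : ⟪w, w'⟫ = 0 := by
    rw [hw'def, real_inner_smul_right, hww₁]; ring
  -- choose a good parameter t
  set S : ι → Set ℝ := fun i =>
    match i with
    | none => ∅
    | some (Sum.inl p) => {t | ⟪z (some (Sum.inl p)), w⟫ + t * ⟪z (some (Sum.inl p)), w'⟫ = 0}
    | some (Sum.inr p) => {t | ⟪z (some (Sum.inr p)), w'⟫ - t * ⟪z (some (Sum.inr p)), w⟫ = 0}
    with hS
  have hSfin : (⋃ i, S i).Finite := by
    refine Set.finite_iUnion fun i => ?_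
    have : (S i).Subsingleton := by
      rcases i with (_ | (p | p))
      · simp [S]
      · intro t1 ht1 t2 ht2
        simp only [S, Set.mem_setOf_eq] at ht1 ht2
        by_cases hb : ⟪z (some (Sum.inl p)), w'⟫ = 0
        · exfalso; apply hw (some (Sum.inl p)); rw [hb, mul_zero, add_zero] at ht1; exact ht1
        · have := ht1.trans ht2.symm
          exact mul_right_cancel₀ hb (by linarith)
      · intro t1 ht1 t2 ht2
        simp only [S, Set.mem_setOf_eq] at ht1 ht2
        have ha := hw (some (Sum.inr p))
        have : t1 * ⟪z (some (Sum.inr p)), w⟫ = t2 * ⟪z (some (Sum.inr p)), w⟫ := by linarith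
        exact mul_right_cancel₀ ha this
    exact this.finite
  obtain ⟨t, ht⟩ := hSfin.infinite_compl.nonempty
  have hts : ∀ i, t ∉ S i := by
    intro i hti
    exact ht (Set.mem_iUnion.mpr ⟨i, hti⟩)
  -- the orthonormal pair
  set c : ℝ := (Real.sqrt (1 + t ^ 2))⁻¹ with hc
  have h1t : (0:ℝ) < 1 + t ^ 2 := by positivity
  have hcpos : 0 < c := by positivity
  have hc2 : c * c * (1 + t ^ 2) = 1 := by
    rw [hc, ← mul_inv, Real.mul_self_sqrt h1t.le]
    exact inv_mul_cancel₀ h1t.ne'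
  set u : EuclideanSpace ℝ (Fin d) := c • (w + t • w') with hu
  set v : EuclideanSpace ℝ (Fin d) := c • (w' - t • w) with hv
  have hww'symm : ⟪w', w⟫ = 0 := by rw [real_inner_comm]; exact hww'
  have huu : ⟪u, u⟫ = 1 := by
    rw [hu]
    simp only [real_inner_smul_left, real_inner_smul_right, inner_add_left, inner_add_right,
      hwnorm, hw'norm, hww', hww'symm]
    nlinarith [hc2]
  have hvv : ⟪v, v⟫ = 1 := by
    rw [hv]
    simp only [real_inner_smul_left, real_inner_smul_right, inner_sub_left, inner_sub_right,
      hwnorm, hw'norm, hww', hww'symm]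
    nlinarith [hc2]
  have huv : ⟪u, v⟫ = 0 := by
    rw [hu, hv]
    simp only [real_inner_smul_left, real_inner_smul_right, inner_add_left, inner_sub_right,
      hwnorm, hw'norm, hww', hww'symm]
    ring
  clear_value w w' u v
  -- build the orthonormal basis
  set s : Set (Fin d) := {i0, i1} with hs
  set fam : Fin d → EuclideanSpace ℝ (Fin d) := fun i => if i = i0 then u else v with hfam
  have hfam0 : fam i0 = u := by simp [hfam]
  have hfam1 : fam i1 = v := by simp [hfam, hi01.symm]
  have hortho : Orthonormal ℝ (s.restrict fam) := by
    rw [orthonormal_iff_ite]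
    rintro ⟨i, hi⟩ ⟨j, hj⟩
    have hvu : ⟪v, u⟫ = 0 := by rw [real_inner_comm]; exact huv
    have hnu : ‖u‖ = 1 := (pow_left_inj₀ (norm_nonneg u) zero_le_one two_ne_zero).mp (by rw [← real_inner_self_eq_norm_sq, huu, one_pow])
    have hnv : ‖v‖ = 1 := (pow_left_inj₀ (norm_nonneg v) zero_le_one two_ne_zero).mp (by rw [← real_inner_self_eq_norm_sq, hvv, one_pow])
    rcases hi with hi | hi <;> rcases hj with hj | hj <;>
      subst hi <;> subst hj <;>
      simp [Set.restrict, hfam0, hfam1, huu, hvv, huv, hvu, hi01, hi01.symm, Subtype.ext_iff, hnu, hnv]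
  have hcard : Module.finrank ℝ (EuclideanSpace ℝ (Fin d)) = Fintype.card (Fin d) := by
    rw [finrank_euclideanSpace_fin, Fintype.card_fin]
  obtain ⟨b, hb⟩ := hortho.exists_orthonormalBasis_extension_of_card_eq hcard
  have hb0 : b i0 = u := by rw [hb i0 (by simp [hs]), hfam0]
  have hb1 : b i1 = v := by rw [hb i1 (by simp [hs]), hfam1]
  refine ⟨b.repr, ?_, ?_⟩
  · intro m n hmn
    by_contra hne
    simp only [b.repr_apply_apply] at hmn
    rw [hb0] at hmn
    have hzero : ⟪u, x m - x n⟫ = 0 := by rw [inner_sub_right, hmn, sub_self]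
    set p : P := ⟨(m, n), hne⟩
    apply hts (some (Sum.inl p))
    have hzp : z (some (Sum.inl p)) = x m - x n := rfl
    have : ⟪x m - x n, u⟫ = 0 := by rw [real_inner_comm]; exact hzero
    rw [hu, real_inner_smul_right, inner_add_right, real_inner_smul_right] at this
    rcases mul_eq_zero.mp this with hc0 | hsum
    · exact absurd hc0 (ne_of_gt hcpos)
    · show ⟪z (some (Sum.inl p)), w⟫ + t * ⟪z (some (Sum.inl p)), w'⟫ = 0
      rw [hzp]; exact hsum
  · intro m n hmn
    by_contra hne
    simp only [b.repr_apply_apply] at hmn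
    rw [hb1] at hmn
    have hzero : ⟪v, y m - y n⟫ = 0 := by rw [inner_sub_right, hmn, sub_self]
    set p : P := ⟨(m, n), hne⟩
    apply hts (some (Sum.inr p))
    have hzp : z (some (Sum.inr p)) = y m - y n := rfl
    have : ⟪y m - y n, v⟫ = 0 := by rw [real_inner_comm]; exact hzero
    rw [hv, real_inner_smul_right, inner_sub_right, real_inner_smul_right] at this
    rcases mul_eq_zero.mp this with hc0 | hsum
    · exact absurd hc0 (ne_of_gt hcpos)
    · show ⟪z (some (Sum.inr p)), w'⟫ - t * ⟪z (some (Sum.inr p)), w⟫ = 0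
      rw [hzp]; exact hsum
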